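/- For every finite simple graph G, the codegree of the stable set polytope satisfies codeg(P_G) ≥ ω(G) + 1, where ω(G) is the clique number of G. -/

import Mathlib

open Finset

noncomputable section

/-- The dilation `kP` of a set `P ⊆ ℝ^ι`. -/
def dilate {ι : Type*} (k : ℕ) (P : Set (ι → ℝ)) : Set (ι → ℝ) :=
  (fun x => (k : ℝ) • x) '' P

/-- A point of `ℝ^ι` is a lattice point if all its coordinates are integers. -/
def IsLatticePt {ι : Type*} (x : ι → ℝ) : Prop := ∀ i, ∃ m : ℤ, x i = m

/-- The codegree of a (full-dimensional lattice) polytope `P ⊆ ℝ^ι`: the smallest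
positive integer `k` such that the interior of `kP` contains a lattice point. -/
def codeg {ι : Type*} (P : Set (ι → ℝ)) : ℕ :=
  sInf {k | 0 < k ∧ ∃ x, IsLatticePt x ∧ x ∈ interior (dilate k P)}

/-- The stable set polytope of a simple graph: the convex hull of the indicator
vectors of the stable (independent) sets of `G`. -/
def stablePolytope {V : Type*} (G : SimpleGraph V) : Set (V → ℝ) :=
  convexHull ℝ {x | ∃ S : Set V, (∀ u ∈ S, ∀ v ∈ S, ¬ G.Adj u v) ∧
    x = S.indicator (fun _ => (1 : ℝ))}

namespace StmtAux

variable {n : ℕ}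

/-- A linear functional bounded by `c` on `S` is strictly below `c` on the interior of `S`,
provided it is positive somewhere. -/
lemma interior_lt_aux {S : Set (Fin n → ℝ)} (f : (Fin n → ℝ) →ₗ[ℝ] ℝ) {c : ℝ}
    (hS : ∀ y ∈ S, f y ≤ c) {d : Fin n → ℝ} (hd : 0 < f d) {x : Fin n → ℝ}
    (hx : x ∈ interior S) : f x < c := by
  have hmem : S ∈ nhds x := mem_interior_iff_mem_nhds.mp hx
  have hcont : Continuous (fun t : ℝ => x + t • d) := by continuity
  have h0 : (fun t : ℝ => x + t • d) 0 = x := by simp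
  have hpre : (fun t : ℝ => x + t • d) ⁻¹' S ∈ nhds (0 : ℝ) := by
    have h := hcont.continuousAt (x := (0 : ℝ))
    rw [ContinuousAt] at h
    simp only [zero_smul, add_zero] at h
    exact h hmem
  have h1 : ∀ᶠ t in nhdsWithin (0 : ℝ) (Set.Ioi 0), x + t • d ∈ S :=
    Filter.Eventually.filter_mono nhdsWithin_le_nhds hpre
  have h2 : ∀ᶠ t in nhdsWithin (0 : ℝ) (Set.Ioi 0), 0 < t :=
    eventually_mem_nhdsWithin
  obtain ⟨t, htS, ht0⟩ := (h1.and h2).exists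
  have hle := hS _ htS
  simp only [map_add, map_smul, smul_eq_mul] at hle
  nlinarith

/-- The linear functional `x ↦ ∑ i ∈ Q, x i`. -/
def sumProj (Q : Finset (Fin n)) : (Fin n → ℝ) →ₗ[ℝ] ℝ :=
  ∑ i ∈ Q, LinearMap.proj i

lemma sumProj_apply (Q : Finset (Fin n)) (x : Fin n → ℝ) :
    sumProj Q x = ∑ i ∈ Q, x i := by
  simp [sumProj]

/-- Each coordinate is nonnegative on the stable set polytope. -/
lemma nonneg_on_polytope (G : SimpleGraph (Fin n)) (i : Fin n) :
    ∀ y ∈ stablePolytope G, 0 ≤ y i := by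
  intro y hy
  have hconv : Convex ℝ {w : Fin n → ℝ | 0 ≤ w i} :=
    convex_halfSpace_ge ⟨fun a b => by simp, fun a b => by simp⟩ 0
  refine convexHull_min ?_ hconv hy
  rintro w ⟨S, -, rfl⟩
  exact Set.indicator_nonneg (fun _ _ => (zero_le_one : (0:ℝ) ≤ 1)) i

/-- The clique inequality is valid on the stable set polytope. -/
lemma clique_valid (G : SimpleGraph (Fin n)) {Q : Finset (Fin n)}
    (hQ : G.IsClique (Q : Set (Fin n))) :
    ∀ y ∈ stablePolytope G, ∑ i ∈ Q, y i ≤ 1 := by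
  classical
  intro y hy
  have hlin : IsLinearMap ℝ (fun w : Fin n → ℝ => ∑ i ∈ Q, w i) :=
    ⟨fun a b => by simp [Finset.sum_add_distrib],
     fun c a => by simp [Finset.mul_sum]⟩
  have hconv : Convex ℝ {w : Fin n → ℝ | ∑ i ∈ Q, w i ≤ 1} :=
    convex_halfSpace_le hlin 1
  refine convexHull_min ?_ hconv hy
  rintro w ⟨S, hS, rfl⟩
  simp only [Set.mem_setOf_eq]
  have hrw : ∀ i, S.indicator (fun _ => (1:ℝ)) i = if i ∈ S then 1 else 0 := by
    intro i; simp [Set.indicator_apply]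
  rw [Finset.sum_congr rfl (fun i _ => hrw i), Finset.sum_boole]
  have hcard : (Q.filter (· ∈ S)).card ≤ 1 := by
    rw [Finset.card_le_one]
    intro a ha b hb
    simp only [Finset.mem_filter] at ha hb
    by_contra hab
    exact hS a ha.2 b hb.2 (hQ ha.1 hb.1 hab)
  exact_mod_cast hcard

/-- Dilation of the interior is inside the interior of the dilation. -/
lemma dilate_interior_subset {k : ℕ} (hk : 0 < k) (P : Set (Fin n → ℝ)) :
    dilate k (interior P) ⊆ interior (dilate k P) := by
  have hk' : (k : ℝ) ≠ 0 := Nat.cast_ne_zero.mpr hk.ne'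
  apply interior_maximal
  · exact Set.image_mono interior_subset
  · have heq : dilate k (interior P) = (fun x => (k : ℝ)⁻¹ • x) ⁻¹' (interior P) := by
      ext x
      constructor
      · rintro ⟨y, hy, rfl⟩
        simpa [Set.mem_preimage, inv_smul_smul₀ hk'] using hy
      · intro hx
        exact ⟨(k : ℝ)⁻¹ • x, hx, by simp [smul_smul, mul_inv_cancel₀ hk']⟩
    rw [heq]
    exact isOpen_interior.preimage (continuous_const_smul _)

/-- The origin is in the generating set. -/
lemma zero_mem_gens (G : SimpleGraph (Fin n)) :
    (0 : Fin n → ℝ) ∈ {x | ∃ S : Set (Fin n), (∀ u ∈ S, ∀ v ∈ S, ¬ G.Adj u v) ∧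
      x = S.indicator (fun _ => (1 : ℝ))} :=
  ⟨∅, by simp, by funext j; simp⟩

/-- Each standard basis vector is in the generating set. -/
lemma single_mem_gens (G : SimpleGraph (Fin n)) (i : Fin n) :
    Pi.single i (1 : ℝ) ∈ {x | ∃ S : Set (Fin n), (∀ u ∈ S, ∀ v ∈ S, ¬ G.Adj u v) ∧
      x = S.indicator (fun _ => (1 : ℝ))} := by
  refine ⟨{i}, ?_, ?_⟩
  · rintro u rfl v rfl
    exact G.irrefl
  · funext j
    simp [Pi.single_apply, Set.indicator_apply, eq_comm]

/-- The open corner simplex is contained in the stable set polytope. -/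
lemma corner_subset (G : SimpleGraph (Fin n)) :
    {x : Fin n → ℝ | (∀ i, 0 < x i) ∧ ∑ i, x i < 1} ⊆ stablePolytope G := by
  classical
  intro x hx
  set A := {x | ∃ S : Set (Fin n), (∀ u ∈ S, ∀ v ∈ S, ¬ G.Adj u v) ∧
      x = S.indicator (fun _ => (1 : ℝ))}
  have hmem : ∀ o : Option (Fin n),
      (Option.elim o (0 : Fin n → ℝ) (fun i => Pi.single i 1)) ∈ stablePolytope G := by
    rintro (_ | i)
    · exact subset_convexHull ℝ A (zero_mem_gens G)
    · exact subset_convexHull ℝ A (single_mem_gens G i)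
  have hxeq : x = ∑ o : Option (Fin n),
      (Option.elim o (1 - ∑ i, x i) x) • (Option.elim o (0 : Fin n → ℝ) (fun i => Pi.single i 1)) := by
    rw [Fintype.sum_option]
    funext j
    simp [Pi.single_apply, Finset.sum_ite_eq', mul_comm]
  rw [hxeq]
  refine (convex_convexHull ℝ A).sum_mem ?_ ?_ (fun o _ => hmem o)
  · rintro (_ | i) -
    · simpa using hx.2.le
    · exact (hx.1 i).le
  · rw [Fintype.sum_option]
    simp only [Option.elim_none, Option.elim_some]
    ring

end StmtAux

open StmtAux in
/-- `codeg(P_G) ≥ ω(G) + 1`. -/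
theorem stmt2 {n : ℕ} (G : SimpleGraph (Fin n)) :
    G.cliqueNum + 1 ≤ codeg (stablePolytope G) := by
  classical
  set P := stablePolytope G
  apply le_csInf
  · -- nonemptiness: k = n + 1 works, witnessed by the all-ones vector
    refine ⟨n + 1, Nat.succ_pos n, (fun _ => 1), fun i => ⟨1, by norm_num⟩, ?_⟩
    have hU : IsOpen {x : Fin n → ℝ | (∀ i, 0 < x i) ∧ ∑ i, x i < 1} := by
      have h1 : IsOpen {x : Fin n → ℝ | ∑ i, x i < 1} :=
        isOpen_lt (by continuity) continuous_const
      have h2 : ∀ i, IsOpen {x : Fin n → ℝ | 0 < x i} :=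
        fun i => isOpen_lt continuous_const (continuous_apply i)
      have heq : {x : Fin n → ℝ | (∀ i, 0 < x i) ∧ ∑ i, x i < 1} =
          (⋂ i, {x | 0 < x i}) ∩ {x | ∑ i, x i < 1} := by
        ext x; simp [Set.mem_iInter]
      rw [heq]
      exact (isOpen_iInter_of_finite h2).inter h1
    have hc : (fun _ => (1 : ℝ) / (n + 1)) ∈
        {x : Fin n → ℝ | (∀ i, 0 < x i) ∧ ∑ i, x i < 1} := by
      constructor
      · intro i; positivity
      · simp only [Finset.sum_const, Finset.card_univ, Fintype.card_fin, nsmul_eq_mul,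
          mul_one_div]
        rw [div_lt_one (by positivity)]
        linarith
    have hcint : (fun _ => (1 : ℝ) / (n + 1)) ∈ interior P :=
      interior_maximal (corner_subset G) hU hc
    apply dilate_interior_subset (Nat.succ_pos n)
    refine ⟨(fun _ => (1 : ℝ) / (n + 1)), hcint, ?_⟩
    funext j
    have : ((n : ℝ) + 1) ≠ 0 := by positivity
    simp only [Pi.smul_apply, smul_eq_mul]
    push_cast
    field_simp
  · rintro k ⟨hk0, x, hlat, hint⟩
    -- every coordinate of x is a positive integer, hence ≥ 1
    have hxpos : ∀ i, (1 : ℝ) ≤ x i := by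
      intro i
      have hval : ∀ y ∈ dilate k P, (-(LinearMap.proj i : (Fin n → ℝ) →ₗ[ℝ] ℝ)) y ≤ 0 := by
        rintro y ⟨z, hz, rfl⟩
        have := nonneg_on_polytope G i z hz
        simp only [LinearMap.neg_apply, LinearMap.proj_apply, Pi.smul_apply, smul_eq_mul]
        nlinarith [Nat.cast_nonneg (α := ℝ) k]
      have hd : (0 : ℝ) < (-(LinearMap.proj i : (Fin n → ℝ) →ₗ[ℝ] ℝ)) (-(Pi.single i 1)) := by
        simp
      have hlt := interior_lt_aux _ hval hd hint
      simp only [LinearMap.neg_apply, LinearMap.proj_apply] at hlt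
      have hpos : 0 < x i := by linarith
      obtain ⟨m, hm⟩ := hlat i
      rw [hm] at hpos ⊢
      have h1 : (1 : ℤ) ≤ m := by exact_mod_cast hpos
      exact_mod_cast h1
    rcases Nat.eq_zero_or_pos G.cliqueNum with h0 | hpos
    · omega
    · obtain ⟨Q, hQ⟩ := G.exists_isNClique_cliqueNum
      obtain ⟨i₀, hi₀⟩ := Finset.card_pos.mp (hQ.2.symm ▸ hpos)
      have hval : ∀ y ∈ dilate k P, sumProj Q y ≤ (k : ℝ) := by
        rintro y ⟨z, hz, rfl⟩
        have h1 := clique_valid G hQ.1 z hz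
        rw [sumProj_apply]
        simp only [Pi.smul_apply, smul_eq_mul, ← Finset.mul_sum]
        nlinarith [Nat.cast_nonneg (α := ℝ) k]
      have hd : (0 : ℝ) < sumProj Q (Pi.single i₀ 1) := by
        rw [sumProj_apply]
        simp [Pi.single_apply, Finset.sum_ite_eq', hi₀]
      have hlt := interior_lt_aux _ hval hd hint
      rw [sumProj_apply] at hlt
      have hge : (G.cliqueNum : ℝ) ≤ ∑ i ∈ Q, x i := by
        rw [← hQ.2]
        calc (Q.card : ℝ) = ∑ _i ∈ Q, (1 : ℝ) := by simp
        _ ≤ ∑ i ∈ Q, x i := Finset.sum_le_sum (fun i _ => hxpos i)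
      have hfin : (G.cliqueNum : ℝ) < (k : ℝ) := lt_of_le_of_lt hge hlt
      have : G.cliqueNum < k := by exact_mod_cast hfin
      omega
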